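/- For exchangeable, almost surely distinct random variables Z₁,…,Z_{n+1}, the rank of Z_{n+1} among all n+1 variables is uniformly distributed on {1,2,…,n+1}; i.e., P(rank(Z_{n+1}) = k) = 1/(n+1) for each k. -/

import Mathlib

open MeasureTheory Set
open scoped Classical ENNReal

lemma card_filter_perm_aux {m : ℕ} (π : Equiv.Perm (Fin m)) (q : Fin m → Prop)
    [DecidablePred q] :
    (Finset.univ.filter fun i => q (π i)).card = (Finset.univ.filter q).card := by
  apply Finset.card_bij (fun i _ => π i)
  · intro a ha
    simp only [Finset.mem_filter, Finset.mem_univ, true_and] at ha ⊢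
    exact ha
  · intro a _ b _ h
    exact π.injective h
  · intro b hb
    refine ⟨π.symm b, ?_, by simp⟩
    simp only [Finset.mem_filter, Finset.mem_univ, true_and] at hb ⊢
    simpa using hb

theorem rank_of_last_uniform
    {Ω : Type*} [MeasurableSpace Ω] (P : Measure Ω) [IsProbabilityMeasure P]
    (n : ℕ) (Z : Fin (n + 1) → Ω → ℝ) (hZ : ∀ i, Measurable (Z i))
    (hexch : ∀ π : Equiv.Perm (Fin (n + 1)),
      Measure.map (fun ω => fun i => Z (π i) ω) P = Measure.map (fun ω => fun i => Z i ω) P)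
    (hdist : ∀ᵐ ω ∂P, ∀ i j : Fin (n + 1), i ≠ j → Z i ω ≠ Z j ω) :
    ∀ k : ℕ, 1 ≤ k → k ≤ n + 1 →
      (P {ω | (Finset.univ.filter fun i : Fin (n + 1) =>
          Z i ω ≤ Z (Fin.last n) ω).card = k}).toReal = 1 / (n + 1) := by
  intro k hk1 hk2
  set r : Ω → Fin (n+1) → ℕ :=
    fun ω j => (Finset.univ.filter fun i => Z i ω ≤ Z j ω).card with hr
  set E : Fin (n+1) → Set Ω := fun j => {ω | r ω j = k} with hE
  set D : Set Ω := {ω | ∀ i j : Fin (n+1), i ≠ j → Z i ω ≠ Z j ω} with hD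
  have hcard_meas : ∀ j : Fin (n+1), Measurable fun v : Fin (n+1) → ℝ =>
      (Finset.univ.filter fun i => v i ≤ v j).card := by
    intro j
    simp_rw [Finset.card_filter]
    exact Finset.measurable_sum _ fun i _ => Measurable.ite
      (measurableSet_le (measurable_pi_apply i) (measurable_pi_apply j))
      measurable_const measurable_const
  set S : Set (Fin (n+1) → ℝ) :=
    {v | (Finset.univ.filter fun i => v i ≤ v (Fin.last n)).card = k} with hS
  have hSmeas : MeasurableSet S := hcard_meas (Fin.last n) (measurableSet_singleton k)
  have hF : Measurable fun ω => fun i => Z i ω := measurable_pi_lambda _ hZ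
  have hEmeas : ∀ j, MeasurableSet (E j) := by
    intro j
    have h1 : E j = (fun ω => fun i => Z i ω) ⁻¹'
        {v : Fin (n+1) → ℝ | (Finset.univ.filter fun i => v i ≤ v j).card = k} := rfl
    rw [h1]
    exact hF (hcard_meas j (measurableSet_singleton k))
  -- exchangeability gives equal probabilities
  have hEq : ∀ j, P (E j) = P (E (Fin.last n)) := by
    intro j
    set π := Equiv.swap j (Fin.last n) with hπ
    have hFπ : Measurable fun ω => fun i => Z (π i) ω :=
      measurable_pi_lambda _ fun i => hZ (π i)
    have hpre : (fun ω => fun i => Z (π i) ω) ⁻¹' S = E j := by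
      ext ω
      simp only [hS, hE, mem_preimage, mem_setOf_eq, hr]
      have hπlast : π (Fin.last n) = j := Equiv.swap_apply_right _ _
      simp only [hπlast]
      rw [card_filter_perm_aux π (fun a => Z a ω ≤ Z j ω)]
    calc P (E j) = P ((fun ω => fun i => Z (π i) ω) ⁻¹' S) := by rw [hpre]
      _ = Measure.map (fun ω => fun i => Z (π i) ω) P S :=
          (Measure.map_apply hFπ hSmeas).symm
      _ = Measure.map (fun ω => fun i => Z i ω) P S := by rw [hexch π]
      _ = P ((fun ω => fun i => Z i ω) ⁻¹' S) := Measure.map_apply hF hSmeas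
      _ = P (E (Fin.last n)) := rfl
  -- rank is strictly monotone in the value
  have hmono : ∀ ω, ∀ j j' : Fin (n+1), Z j ω < Z j' ω → r ω j < r ω j' := by
    intro ω j j' hlt
    apply Finset.card_lt_card
    constructor
    · intro i hi
      simp only [Finset.mem_filter, Finset.mem_univ, true_and] at hi ⊢
      exact hi.trans hlt.le
    · intro hsub
      have h2 := hsub (Finset.mem_filter.mpr ⟨Finset.mem_univ j', le_refl _⟩)
      simp only [Finset.mem_filter, Finset.mem_univ, true_and] at h2
      exact absurd h2 (not_le.mpr hlt)
  have hinj : ∀ ω ∈ D, Function.Injective (r ω) := by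
    intro ω hω j j' h
    by_contra hne
    rcases lt_trichotomy (Z j ω) (Z j' ω) with hlt | heq | hlt
    · exact absurd h (Nat.ne_of_lt (hmono ω j j' hlt))
    · exact hω j j' hne heq
    · exact absurd h.symm (Nat.ne_of_lt (hmono ω j' j hlt))
  have hexist : ∀ ω ∈ D, ∃ j, r ω j = k := by
    intro ω hω
    have himg : Finset.univ.image (r ω) = Finset.Icc 1 (n+1) := by
      apply Finset.eq_of_subset_of_card_le
      · intro x hx
        simp only [Finset.mem_image] at hx
        obtain ⟨j, _, rfl⟩ := hx
        refine Finset.mem_Icc.mpr ⟨?_, ?_⟩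
        · exact Finset.card_pos.mpr
            ⟨j, Finset.mem_filter.mpr ⟨Finset.mem_univ j, le_refl _⟩⟩
        · exact le_trans (Finset.card_filter_le _ _) (by simp)
      · rw [Nat.card_Icc, Finset.card_image_of_injective _ (hinj ω hω)]
        simp
    have hk : k ∈ Finset.univ.image (r ω) := by
      rw [himg]; exact Finset.mem_Icc.mpr ⟨hk1, hk2⟩
    simpa using hk
  have hDmeas : MeasurableSet D := by
    have h1 : D = ⋂ (i : Fin (n+1)) (j : Fin (n+1)), {ω | i ≠ j → Z i ω ≠ Z j ω} := by
      ext ω; simp [hD]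
    rw [h1]
    refine MeasurableSet.iInter fun i => MeasurableSet.iInter fun j => ?_
    by_cases h : i = j
    · simp [h]
    · have h2 : {ω | i ≠ j → Z i ω ≠ Z j ω} = {ω | Z i ω = Z j ω}ᶜ := by
        ext ω; simp [h]
      rw [h2]
      exact (measurableSet_eq_fun (hZ i) (hZ j)).compl
  have hDc : P Dᶜ = 0 := by
    have := ae_iff.mp hdist
    simpa [hD, compl_setOf] using this
  have hPD : P D = 1 := by
    have h1 : (1 : ℝ≥0∞) = P univ := (measure_univ (μ := P)).symm
    have h2 : P univ ≤ P D + P Dᶜ := by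
      rw [← union_compl_self D] at h1 ⊢
      exact measure_union_le _ _
    rw [hDc, add_zero] at h2
    exact le_antisymm prob_le_one (h1 ▸ h2)
  have hdisj : Pairwise (Function.onFun Disjoint fun j => E j ∩ D) := by
    intro j j' hne
    rw [Function.onFun, Set.disjoint_left]
    rintro ω ⟨hj, hωD⟩ ⟨hj', _⟩
    exact hne (hinj ω hωD (hj.trans hj'.symm))
  have hsum : ∑ j : Fin (n+1), P (E j ∩ D) = 1 := by
    rw [← tsum_fintype (L := .unconditional _), ← measure_iUnion hdisj (fun j => (hEmeas j).inter hDmeas)]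
    apply le_antisymm prob_le_one
    calc (1 : ℝ≥0∞) = P D := hPD.symm
      _ ≤ P (⋃ j, E j ∩ D) := by
          apply measure_mono
          intro ω hω
          obtain ⟨j, hj⟩ := hexist ω hω
          exact mem_iUnion.mpr ⟨j, hj, hω⟩
  have hinter : ∀ j, P (E j ∩ D) = P (E j) := by
    intro j
    apply le_antisymm (measure_mono inter_subset_left)
    calc P (E j) ≤ P ((E j ∩ D) ∪ Dᶜ) := by
          apply measure_mono
          intro ω hω
          by_cases h : ω ∈ D
          · exact Or.inl ⟨hω, h⟩
          · exact Or.inr h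
      _ ≤ P (E j ∩ D) + P Dᶜ := measure_union_le _ _
      _ = P (E j ∩ D) := by rw [hDc, add_zero]
  have hone : P (E (Fin.last n)) * (↑(n+1) : ℝ≥0∞) = 1 := by
    have : ∑ j : Fin (n+1), P (E (Fin.last n)) = 1 := by
      rw [← hsum]
      exact Finset.sum_congr rfl fun j _ => by rw [← hEq j, hinter j]
    simpa [Finset.sum_const, mul_comm] using this
  have hval : P (E (Fin.last n)) = (↑(n+1) : ℝ≥0∞)⁻¹ :=
    ENNReal.eq_inv_of_mul_eq_one_left hone
  have hgoal : P {ω | (Finset.univ.filter fun i : Fin (n + 1) =>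
      Z i ω ≤ Z (Fin.last n) ω).card = k} = P (E (Fin.last n)) := rfl
  rw [hgoal, hval, ENNReal.toReal_inv, one_div]
  simp only [Nat.cast_add, Nat.cast_one]
  rw [ENNReal.toReal_add (ENNReal.natCast_ne_top n) ENNReal.one_ne_top]
  simp
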